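/- Let y₁(x) and y₂(x) be twice-differentiable functions on a domain U ⊂ ℂ avoiding 0 and 1, and suppose α(β-1)(β-γ)(α+1-β) ≠ 0. Define Ψ(y,y';x) = (α(β-γ+(α+1-β)x)y + x(x-1)(α+1-β)y') / (α(β-1)(β-γ)), and the 2×2 matrix Y(x) with first row (y₁, y₂) and second row (Ψ(y₁,y₁';x), Ψ(y₂,y₂';x)). Then Y satisfies Y' = (A₀/x + A₁/(x-1)) Y, with A₀ = (1/(α+1-β))·[[α(β-γ), α(1-β)(β-γ)],[α+1-γ, (1-β)(α+1-γ)]] and A₁ = (1/(α+1-β))·[[α(γ-α-1), α(β-1)(β-γ)],[γ-α-1, (β-1)(β-γ)]], if and only if y₁ and y₂ both satisfy the Gauss hypergeometric equation x(1-x)y'' + (γ-(α+β+1)x)y' - αβ y = 0. -/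

import Mathlib

open Filter Complex Matrix

set_option maxHeartbeats 1000000
set_option maxRecDepth 16000

private lemma derivPsi (α β γ : ℂ) (x : ℂ) (y : ℂ → ℂ)
    (hd1 : DifferentiableAt ℂ y x) (hd2 : DifferentiableAt ℂ (deriv y) x) :
    deriv (fun t => (α * (β - γ + (α + 1 - β) * t) * y t
      + t * (t - 1) * (α + 1 - β) * deriv y t) / (α * (β - 1) * (β - γ))) x
    = (α * (α + 1 - β) * y x + α * (β - γ + (α + 1 - β) * x) * deriv y x
       + (2 * x - 1) * (α + 1 - β) * deriv y x
       + x * (x - 1) * (α + 1 - β) * deriv (deriv y) x) / (α * (β - 1) * (β - γ)) := by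
  have h1 := hd1.hasDerivAt
  have h2 := hd2.hasDerivAt
  have hc : HasDerivAt (fun t : ℂ => α * (β - γ + (α + 1 - β) * t)) (α * (α + 1 - β)) x := by
    simpa using (((hasDerivAt_id x).const_mul (α + 1 - β)).const_add (β - γ)).const_mul α
  have hq : HasDerivAt (fun t : ℂ => t * (t - 1) * (α + 1 - β))
      ((1 * (x - 1) + x * 1) * (α + 1 - β)) x :=
    (((hasDerivAt_id' x).mul ((hasDerivAt_id' x).sub_const 1))).mul_const (α + 1 - β)
  have H := ((hc.mul h1).add (hq.mul h2)).div_const (α * (β - 1) * (β - γ))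
  exact H.deriv.trans (by ring)

private lemma row0 (α β γ x a b : ℂ) (hα : α ≠ 0) (hβ1 : β - 1 ≠ 0) (hβγ : β - γ ≠ 0)
    (hαβ : α + 1 - β ≠ 0) (hx0 : x ≠ 0) (hx1' : x - 1 ≠ 0) :
    b = (x⁻¹ * ((α + 1 - β)⁻¹ * (α * (β - γ))) + (x - 1)⁻¹ * ((α + 1 - β)⁻¹ * (α * (γ - α - 1)))) * a
      + (x⁻¹ * ((α + 1 - β)⁻¹ * (α * (1 - β) * (β - γ))) + (x - 1)⁻¹ * ((α + 1 - β)⁻¹ * (α * (β - 1) * (β - γ)))) *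
        ((α * (β - γ + (α + 1 - β) * x) * a + x * (x - 1) * (α + 1 - β) * b) / (α * (β - 1) * (β - γ))) := by
  field_simp
  ring

private lemma row1 (α β γ x a b c : ℂ) (hα : α ≠ 0) (hβ1 : β - 1 ≠ 0) (hβγ : β - γ ≠ 0)
    (hαβ : α + 1 - β ≠ 0) (hx0 : x ≠ 0) (hx1' : x - 1 ≠ 0)
    (hode : x * (1 - x) * c + (γ - (α + β + 1) * x) * b - α * β * a = 0) :
    (α * (α + 1 - β) * a + α * (β - γ + (α + 1 - β) * x) * b + (2 * x - 1) * (α + 1 - β) * b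
      + x * (x - 1) * (α + 1 - β) * c) / (α * (β - 1) * (β - γ))
    = (x⁻¹ * ((α + 1 - β)⁻¹ * (α + 1 - γ)) + (x - 1)⁻¹ * ((α + 1 - β)⁻¹ * (γ - α - 1))) * a
      + (x⁻¹ * ((α + 1 - β)⁻¹ * ((1 - β) * (α + 1 - γ))) + (x - 1)⁻¹ * ((α + 1 - β)⁻¹ * ((β - 1) * (β - γ)))) *
        ((α * (β - γ + (α + 1 - β) * x) * a + x * (x - 1) * (α + 1 - β) * b) / (α * (β - 1) * (β - γ))) := by
  field_simp
  linear_combination (-(x * (x - 1) * (α + 1 - β)^2)) * hode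

private lemma row1_rev (α β γ x a b c : ℂ) (hα : α ≠ 0) (hβ1 : β - 1 ≠ 0) (hβγ : β - γ ≠ 0)
    (hαβ : α + 1 - β ≠ 0) (hx0 : x ≠ 0) (hx1' : x - 1 ≠ 0)
    (heq : (α * (α + 1 - β) * a + α * (β - γ + (α + 1 - β) * x) * b + (2 * x - 1) * (α + 1 - β) * b
      + x * (x - 1) * (α + 1 - β) * c) / (α * (β - 1) * (β - γ))
    = (x⁻¹ * ((α + 1 - β)⁻¹ * (α + 1 - γ)) + (x - 1)⁻¹ * ((α + 1 - β)⁻¹ * (γ - α - 1))) * a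
      + (x⁻¹ * ((α + 1 - β)⁻¹ * ((1 - β) * (α + 1 - γ))) + (x - 1)⁻¹ * ((α + 1 - β)⁻¹ * ((β - 1) * (β - γ)))) *
        ((α * (β - γ + (α + 1 - β) * x) * a + x * (x - 1) * (α + 1 - β) * b) / (α * (β - 1) * (β - γ)))) :
    x * (1 - x) * c + (γ - (α + β + 1) * x) * b - α * β * a = 0 := by
  field_simp at heq
  have hk : x ^ 2 * (x - 1) ^ 2 * (α + 1 - β) ^ 5 * (α * (β - 1) * (β - γ)) ≠ 0 :=
    mul_ne_zero (mul_ne_zero (mul_ne_zero (pow_ne_zero 2 hx0) (pow_ne_zero 2 hx1'))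
      (pow_ne_zero 5 hαβ)) (mul_ne_zero (mul_ne_zero hα hβ1) hβγ)
  apply mul_left_cancel₀ hk
  rw [mul_zero]
  linear_combination (-(x * (x - 1) * (α + 1 - β)^3 * (α * (β - 1) * (β - γ)))) * heq

/-- Lemma 1 of the paper: with
`Ψ(y,y';x) = (α(β-γ+(α+1-β)x) y + x(x-1)(α+1-β) y') / (α(β-1)(β-γ))`,
the 2×2 matrix `Y(x)` with rows `(y₁,y₂)` and `(Ψ(y₁,y₁';x), Ψ(y₂,y₂';x))`
satisfies `Y' = (A₀/x + A₁/(x-1)) Y` on `U` if and only if `y₁` and `y₂` both satisfy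
the Gauss hypergeometric equation `x(1-x) y'' + (γ-(α+β+1)x) y' - αβ y = 0` on `U`. -/
theorem gauss_matrix_system_iff_scalar (α β γ : ℂ)
    (h : α * (β - 1) * (β - γ) * (α + 1 - β) ≠ 0)
    (U : Set ℂ) (hU : IsOpen U) (hU0 : (0 : ℂ) ∉ U) (hU1 : (1 : ℂ) ∉ U)
    (y₁ y₂ : ℂ → ℂ)
    (hy₁ : ∀ x ∈ U, DifferentiableAt ℂ y₁ x ∧ DifferentiableAt ℂ (deriv y₁) x)
    (hy₂ : ∀ x ∈ U, DifferentiableAt ℂ y₂ x ∧ DifferentiableAt ℂ (deriv y₂) x) :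
    let Ψ : (ℂ → ℂ) → ℂ → ℂ := fun y x =>
      (α * (β - γ + (α + 1 - β) * x) * y x + x * (x - 1) * (α + 1 - β) * deriv y x) /
        (α * (β - 1) * (β - γ))
    let A₀ : Matrix (Fin 2) (Fin 2) ℂ :=
      (α + 1 - β)⁻¹ • !![α * (β - γ), α * (1 - β) * (β - γ);
                          α + 1 - γ, (1 - β) * (α + 1 - γ)]
    let A₁ : Matrix (Fin 2) (Fin 2) ℂ :=
      (α + 1 - β)⁻¹ • !![α * (γ - α - 1), α * (β - 1) * (β - γ);
                          γ - α - 1, (β - 1) * (β - γ)]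
    let Y : ℂ → Matrix (Fin 2) (Fin 2) ℂ := fun x =>
      !![y₁ x, y₂ x; Ψ y₁ x, Ψ y₂ x]
    (∀ x ∈ U, ∀ i j : Fin 2,
        deriv (fun t => Y t i j) x = ((x⁻¹ • A₀ + (x - 1)⁻¹ • A₁) * Y x) i j) ↔
      (∀ x ∈ U,
        (x * (1 - x) * deriv (deriv y₁) x + (γ - (α + β + 1) * x) * deriv y₁ x
          - α * β * y₁ x = 0) ∧
        (x * (1 - x) * deriv (deriv y₂) x + (γ - (α + β + 1) * x) * deriv y₂ x
          - α * β * y₂ x = 0)) := by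
  intro Ψ A₀ A₁ Y
  have h' := h
  rw [mul_ne_zero_iff, mul_ne_zero_iff, mul_ne_zero_iff] at h'
  obtain ⟨⟨⟨hα, hβ1⟩, hβγ⟩, hαβ⟩ := h'
  constructor
  · intro hm x hx
    have hx0 : x ≠ 0 := fun e => hU0 (e ▸ hx)
    have hx1 : x ≠ 1 := fun e => hU1 (e ▸ hx)
    have hx1' : x - 1 ≠ 0 := sub_ne_zero.mpr hx1
    obtain ⟨hd1, hd2⟩ := hy₁ x hx
    obtain ⟨hd1', hd2'⟩ := hy₂ x hx
    constructor
    · have H := hm x hx 1 0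
      simp only [Y, Ψ, A₀, A₁, Matrix.mul_apply, Fin.sum_univ_two, Matrix.add_apply,
        Matrix.smul_apply, Matrix.of_apply, Matrix.cons_val', Matrix.cons_val_zero,
        Matrix.cons_val_one, Matrix.head_cons, Matrix.empty_val', Matrix.cons_val_fin_one,
        Matrix.head_fin_const, smul_eq_mul] at H
      rw [derivPsi α β γ x y₁ hd1 hd2] at H
      exact row1_rev α β γ x (y₁ x) (deriv y₁ x) (deriv (deriv y₁) x)
        hα hβ1 hβγ hαβ hx0 hx1' H
    · have H := hm x hx 1 1
      simp only [Y, Ψ, A₀, A₁, Matrix.mul_apply, Fin.sum_univ_two, Matrix.add_apply,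
        Matrix.smul_apply, Matrix.of_apply, Matrix.cons_val', Matrix.cons_val_zero,
        Matrix.cons_val_one, Matrix.head_cons, Matrix.empty_val', Matrix.cons_val_fin_one,
        Matrix.head_fin_const, smul_eq_mul] at H
      rw [derivPsi α β γ x y₂ hd1' hd2'] at H
      exact row1_rev α β γ x (y₂ x) (deriv y₂ x) (deriv (deriv y₂) x)
        hα hβ1 hβγ hαβ hx0 hx1' H
  · intro hs x hx i j
    have hx0 : x ≠ 0 := fun e => hU0 (e ▸ hx)
    have hx1 : x ≠ 1 := fun e => hU1 (e ▸ hx)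
    have hx1' : x - 1 ≠ 0 := sub_ne_zero.mpr hx1
    obtain ⟨hd1, hd2⟩ := hy₁ x hx
    obtain ⟨hd1', hd2'⟩ := hy₂ x hx
    obtain ⟨ho1, ho2⟩ := hs x hx
    fin_cases i <;> fin_cases j <;>
      simp only [Fin.zero_eta, Fin.mk_one, Fin.isValue, Y, Ψ, A₀, A₁, Matrix.mul_apply,
        Fin.sum_univ_two, Matrix.add_apply, Matrix.smul_apply, Matrix.of_apply,
        Matrix.cons_val', Matrix.cons_val_zero, Matrix.cons_val_one, Matrix.head_cons,
        Matrix.empty_val', Matrix.cons_val_fin_one, Matrix.head_fin_const, smul_eq_mul]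
    · exact row0 α β γ x (y₁ x) (deriv y₁ x) hα hβ1 hβγ hαβ hx0 hx1'
    · exact row0 α β γ x (y₂ x) (deriv y₂ x) hα hβ1 hβγ hαβ hx0 hx1'
    · rw [derivPsi α β γ x y₁ hd1 hd2]
      exact row1 α β γ x (y₁ x) (deriv y₁ x) (deriv (deriv y₁) x)
        hα hβ1 hβγ hαβ hx0 hx1' ho1
    · rw [derivPsi α β γ x y₂ hd1' hd2']
      exact row1 α β γ x (y₂ x) (deriv y₂ x) (deriv (deriv y₂) x)
        hα hβ1 hβγ hαβ hx0 hx1' ho2
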